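/- Goodman's inequality for graphons: for every graphon W, t(K_3, W) ≥ t(K_2, W) · (2·t(K_2, W) − 1), where K_2 is the graph consisting of a single edge and K_3 is the triangle; explicitly, ∫_{[0,1]^3} W(x,y)W(y,z)W(z,x) dx dy dz ≥ (∫_{[0,1]^2} W(x,y) dx dy) · (2·∫_{[0,1]^2} W(x,y) dx dy − 1). -/

import Mathlib

open MeasureTheory Set Function

/-- The Lebesgue measure restricted to `[0,1]`. -/
noncomputable abbrev μ01 : MeasureTheory.Measure ℝ :=
  MeasureTheory.volume.restrict (Set.Icc (0:ℝ) 1)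

/-- A graphon: a symmetric measurable function `[0,1]² → [0,1]`
(defined on all of `ℝ²` for convenience). -/
def IsGraphon (W : ℝ → ℝ → ℝ) : Prop :=
  Measurable (Function.uncurry W) ∧ (∀ x y, W x y = W y x) ∧ ∀ x y, W x y ∈ Set.Icc (0:ℝ) 1

instance : IsProbabilityMeasure μ01 := ⟨by simp [Real.volume_Icc]⟩

private lemma int_add_sub {α : Type*} [MeasurableSpace α] {μ : Measure α} {f g h : α → ℝ}
    (hf : Integrable f μ) (hg : Integrable g μ) (hh : Integrable h μ) :
    ∫ x, (f x + g x - h x) ∂μ = (∫ x, f x ∂μ) + (∫ x, g x ∂μ) - ∫ x, h x ∂μ := by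
  have h1 : Integrable (fun x => f x + g x) μ := hf.add hg
  rw [integral_sub h1 hh, integral_add hf hg]

private lemma integrable_bdd {α : Type*} [MeasurableSpace α] {μ : Measure α}
    [IsFiniteMeasure μ] {f : α → ℝ} (hf : AEStronglyMeasurable f μ) (C : ℝ)
    (hb : ∀ x, |f x| ≤ C) : Integrable f μ :=
  (integrable_const C).mono' hf (Filter.Eventually.of_forall hb)

/-- Goodman's inequality: `t(K₃,W) ≥ t(K₂,W)·(2·t(K₂,W) − 1)`. -/
theorem goodman_inequality (W : ℝ → ℝ → ℝ) (hW : IsGraphon W) :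
    (∫ x, ∫ y, W x y ∂μ01 ∂μ01) * (2 * (∫ x, ∫ y, W x y ∂μ01 ∂μ01) - 1) ≤
      ∫ x, ∫ y, ∫ z, W x y * W y z * W z x ∂μ01 ∂μ01 ∂μ01 := by
  obtain ⟨hm, hsym, hbd⟩ := hW
  have h0 : ∀ x y, 0 ≤ W x y := fun x y => (hbd x y).1
  have h1 : ∀ x y, W x y ≤ 1 := fun x y => (hbd x y).2
  -- measurability of slices
  have hmx : ∀ x, Measurable (W x) := fun x =>
    hm.comp (measurable_const.prodMk measurable_id)
  have hWint : ∀ x, Integrable (W x) μ01 := fun x =>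
    integrable_bdd (hmx x).aestronglyMeasurable 1
      (fun y => abs_le.2 ⟨by linarith [h0 x y], h1 x y⟩)
  set d : ℝ → ℝ := fun x => ∫ y, W x y ∂μ01 with hd
  have hdm : Measurable d := (hm.stronglyMeasurable.integral_prod_right' (ν := μ01)).measurable
  have hd0 : ∀ x, 0 ≤ d x := fun x => integral_nonneg (h0 x)
  have hd1 : ∀ x, d x ≤ 1 := fun x => by
    calc d x ≤ ∫ _, (1:ℝ) ∂μ01 := integral_mono (hWint x) (integrable_const 1) (h1 x)
    _ = 1 := by simp
  have hdint : Integrable d μ01 :=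
    integrable_bdd hdm.aestronglyMeasurable 1 (fun x => abs_le.2 ⟨by linarith [hd0 x], hd1 x⟩)
  have hd2int : Integrable (fun x => d x * d x) μ01 :=
    integrable_bdd (hdm.mul hdm).aestronglyMeasurable 1
      (fun x => abs_le.2 ⟨by nlinarith [hd0 x, hd1 x], by nlinarith [hd0 x, hd1 x]⟩)
  set t : ℝ := ∫ x, d x ∂μ01 with ht
  have htW : (∫ x, ∫ y, W x y ∂μ01 ∂μ01) = t := rfl
  -- Cauchy–Schwarz via `∫ (d - t)² ≥ 0` : `t² ≤ ∫ d²`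
  have hCS : t * t ≤ ∫ x, d x * d x ∂μ01 := by
    have hnn : 0 ≤ ∫ x, (d x - t) * (d x - t) ∂μ01 :=
      integral_nonneg (fun x => mul_self_nonneg _)
    have hexp : ∫ x, (d x - t) * (d x - t) ∂μ01
        = (∫ x, d x * d x ∂μ01) - 2 * t * t + t * t := by
      have heq : (fun x => (d x - t) * (d x - t))
          = fun x => d x * d x + t * t - (2 * t) * d x := by
        funext x; ring
      rw [heq, int_add_sub hd2int (integrable_const _) (hdint.const_mul _),
        integral_const, integral_const_mul]
      simp only [measure_univ, probReal_univ, ENNReal.toReal_one, smul_eq_mul, one_mul]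
      rw [← ht]; ring
    nlinarith
  -- pointwise bounds for the triangle integrand
  have hmF2 : ∀ x y, Measurable (fun z => W x y * W y z * W z x) := by
    intro x y
    have h2 : Measurable (fun z => W z x) := by
      simp only [fun z => hsym z x]; exact hmx x
    exact ((measurable_const.mul (hmx y)).mul h2)
  have hFbd : ∀ x y z, |W x y * W y z * W z x| ≤ 1 := by
    intro x y z
    rw [abs_le]
    refine ⟨by nlinarith [mul_nonneg (mul_nonneg (h0 x y) (h0 y z)) (h0 z x)], ?_⟩
    nlinarith [h0 x y, h0 y z, h0 z x, h1 x y, h1 y z, h1 z x,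
      mul_nonneg (mul_nonneg (h0 x y) (h0 y z)) (h0 z x),
      mul_le_one₀ (h1 x y) (h0 y z) (h1 y z)]
  set F : ℝ → ℝ → ℝ := fun x y => ∫ z, W x y * W y z * W z x ∂μ01 with hF
  set G : ℝ → ℝ → ℝ := fun x y => W x y * (d y + d x - 1) with hG
  -- Step B : G x y ≤ F x y
  have hBG : ∀ x y, G x y ≤ F x y := by
    intro x y
    have hint1 : Integrable (fun z => W x y * (W y z + W z x - 1)) μ01 := by
      refine integrable_bdd ?_ 1 ?_
      · have h2 : Measurable (fun z => W z x) := by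
          simp only [fun z => hsym z x]; exact hmx x
        exact (measurable_const.mul (((hmx y).add h2).sub measurable_const)).aestronglyMeasurable
      · intro z
        rw [abs_le]
        constructor
        · nlinarith [h0 x y, h1 x y, h0 y z, h0 z x, h1 y z, h1 z x,
            mul_nonneg (h0 x y) (h0 y z), mul_nonneg (h0 x y) (h0 z x)]
        · nlinarith [h0 x y, h1 x y, h0 y z, h0 z x, h1 y z, h1 z x,
            mul_nonneg (h0 x y) (h0 y z), mul_nonneg (h0 x y) (h0 z x)]
    have hint2 : Integrable (fun z => W x y * W y z * W z x) μ01 :=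
      integrable_bdd (hmF2 x y).aestronglyMeasurable 1 (hFbd x y)
    have hmono : ∫ z, W x y * (W y z + W z x - 1) ∂μ01 ≤ F x y := by
      refine integral_mono hint1 hint2 (fun z => ?_)
      nlinarith [h0 x y, h0 y z, h0 z x, h1 y z, h1 z x,
        mul_nonneg (mul_nonneg (h0 x y) (sub_nonneg.2 (h1 y z))) (sub_nonneg.2 (h1 z x))]
    have hcomp : ∫ z, W x y * (W y z + W z x - 1) ∂μ01 = G x y := by
      rw [integral_const_mul]
      congr 1
      simp only [show ∀ z, W z x = W x z from fun z => hsym z x]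
      rw [int_add_sub (hWint y) (hWint x) (integrable_const 1)]
      simp [hd]
    linarith [hcomp ▸ hmono]
  -- measurability of F and G as functions of two variables
  have hGm : Measurable (uncurry G) := by
    have : uncurry G = fun p : ℝ × ℝ => W p.1 p.2 * (d p.2 + d p.1 - 1) := rfl
    rw [this]
    exact hm.mul (((hdm.comp measurable_snd).add (hdm.comp measurable_fst)).sub measurable_const)
  have hGbd : ∀ x y, |G x y| ≤ 1 := by
    intro x y
    simp only [hG]
    rw [abs_le]
    constructor
    · nlinarith [h0 x y, h1 x y, hd0 x, hd0 y, hd1 x, hd1 y,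
        mul_nonneg (h0 x y) (hd0 x), mul_nonneg (h0 x y) (hd0 y)]
    · nlinarith [h0 x y, h1 x y, hd0 x, hd0 y, hd1 x, hd1 y,
        mul_nonneg (h0 x y) (hd0 x), mul_nonneg (h0 x y) (hd0 y)]
  have hFm : Measurable (uncurry F) := by
    have hq : Measurable (fun q : (ℝ × ℝ) × ℝ => W q.1.1 q.1.2 * W q.1.2 q.2 * W q.2 q.1.1) := by
      exact ((hm.comp measurable_fst).mul
        (hm.comp ((measurable_snd.comp measurable_fst).prodMk measurable_snd))).mul
        (hm.comp (measurable_snd.prodMk (measurable_fst.comp measurable_fst)))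
    exact (hq.stronglyMeasurable.integral_prod_right' (ν := μ01)).measurable
  have hF0 : ∀ x y, 0 ≤ F x y := fun x y =>
    integral_nonneg fun z => mul_nonneg (mul_nonneg (h0 x y) (h0 y z)) (h0 z x)
  have hFbd' : ∀ x y, |F x y| ≤ 1 := by
    intro x y
    have := norm_integral_le_of_norm_le_const (μ := μ01)
      (f := fun z => W x y * W y z * W z x) (C := 1)
      (Filter.Eventually.of_forall fun z => by rw [Real.norm_eq_abs]; exact hFbd x y z)
    simpa [Real.norm_eq_abs] using this
  -- integrability in y, and of the outer integrals
  have hFyint : ∀ x, Integrable (fun y => F x y) μ01 := fun x =>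
    integrable_bdd (hFm.comp (measurable_const.prodMk measurable_id)).aestronglyMeasurable 1
      (fun y => hFbd' x y)
  have hGyint : ∀ x, Integrable (fun y => G x y) μ01 := fun x =>
    integrable_bdd (hGm.comp (measurable_const.prodMk measurable_id)).aestronglyMeasurable 1
      (fun y => hGbd x y)
  have hFoutm : Measurable (fun x => ∫ y, F x y ∂μ01) :=
    (hFm.stronglyMeasurable.integral_prod_right' (ν := μ01)).measurable
  have hGoutm : Measurable (fun x => ∫ y, G x y ∂μ01) :=
    (hGm.stronglyMeasurable.integral_prod_right' (ν := μ01)).measurable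
  have habs : ∀ (f : ℝ → ℝ), (∀ y, |f y| ≤ 1) → |∫ y, f y ∂μ01| ≤ 1 := by
    intro f hf
    have := norm_integral_le_of_norm_le_const (μ := μ01) (f := f) (C := 1)
      (Filter.Eventually.of_forall fun z => by rw [Real.norm_eq_abs]; exact hf z)
    simpa [Real.norm_eq_abs] using this
  have hFoutint : Integrable (fun x => ∫ y, F x y ∂μ01) μ01 :=
    integrable_bdd hFoutm.aestronglyMeasurable 1 (fun x => habs _ (hFbd' x))
  have hGoutint : Integrable (fun x => ∫ y, G x y ∂μ01) μ01 :=
    integrable_bdd hGoutm.aestronglyMeasurable 1 (fun x => habs _ (hGbd x))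
  -- Step C : ∫∫ G ≤ ∫∫ F
  have hstep : ∫ x, ∫ y, G x y ∂μ01 ∂μ01 ≤ ∫ x, ∫ y, F x y ∂μ01 ∂μ01 :=
    integral_mono hGoutint hFoutint fun x =>
      integral_mono (hGyint x) (hFyint x) (fun y => hBG x y)
  -- Step D : compute ∫∫ G = 2 ∫ d² − t
  set A : ℝ → ℝ := fun x => ∫ y, W x y * d y ∂μ01 with hA
  have hAm : Measurable A :=
    ((hm.mul (hdm.comp measurable_snd)).stronglyMeasurable.integral_prod_right'
      (ν := μ01)).measurable
  have hWdint : ∀ x, Integrable (fun y => W x y * d y) μ01 := fun x =>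
    integrable_bdd ((hmx x).mul hdm).aestronglyMeasurable 1
      (fun y => abs_le.2 ⟨by nlinarith [h0 x y, hd0 y], by
        nlinarith [h0 x y, h1 x y, hd0 y, hd1 y, mul_nonneg (h0 x y) (hd0 y)]⟩)
  have hAbd : ∀ x, |A x| ≤ 1 := fun x => habs _ fun y =>
    abs_le.2 ⟨by nlinarith [h0 x y, hd0 y], by
      nlinarith [h0 x y, h1 x y, hd0 y, hd1 y, mul_nonneg (h0 x y) (hd0 y)]⟩
  have hAint : Integrable A μ01 := integrable_bdd hAm.aestronglyMeasurable 1 hAbd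
  have hGinner : ∀ x, ∫ y, G x y ∂μ01 = A x + d x * d x - d x := by
    intro x
    have heq : (fun y => G x y) = fun y => (W x y * d y + W x y * d x) - W x y := by
      funext y; simp only [hG]; ring
    rw [heq, int_add_sub (hWdint x) ((hWint x).mul_const _) (hWint x), integral_mul_const]
  have hAeq : ∫ x, A x ∂μ01 = ∫ y, d y * d y ∂μ01 := by
    have hprodint : Integrable (uncurry fun x y => W x y * d y) (μ01.prod μ01) := by
      refine integrable_bdd ((hm.mul (hdm.comp measurable_snd)).aestronglyMeasurable) 1 ?_
      rintro ⟨x, y⟩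
      simp only [Function.uncurry_apply_pair]
      exact abs_le.2 ⟨by nlinarith [h0 x y, hd0 y], by
        nlinarith [h0 x y, h1 x y, hd0 y, hd1 y, mul_nonneg (h0 x y) (hd0 y)]⟩
    have hswap := integral_integral_swap hprodint
    rw [hA]
    rw [hswap]
    congr 1; funext y
    rw [integral_mul_const]
    congr 1
    simp only [show ∀ x, W x y = W y x from fun x => hsym x y]
    rfl
  have hGG : ∫ x, ∫ y, G x y ∂μ01 ∂μ01 = 2 * (∫ x, d x * d x ∂μ01) - t := by
    calc ∫ x, ∫ y, G x y ∂μ01 ∂μ01 = ∫ x, (A x + d x * d x - d x) ∂μ01 := by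
          congr 1; funext x; exact hGinner x
      _ = (∫ x, A x ∂μ01) + (∫ x, d x * d x ∂μ01) - t := by
          rw [int_add_sub hAint hd2int hdint, ← ht]
      _ = 2 * (∫ x, d x * d x ∂μ01) - t := by rw [hAeq]; ring
  -- conclude
  have hfinal : ∫ x, ∫ y, F x y ∂μ01 ∂μ01 ≤ ∫ x, ∫ y, ∫ z, W x y * W y z * W z x ∂μ01 ∂μ01 ∂μ01 :=
    le_of_eq rfl
  nlinarith [hstep, hGG, hCS, hfinal]
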